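/- Every double circuit in a bicircular matroid has degree at most 6. -/

import Mathlib

open Set

namespace Paper

/-! ### Multigraphs, walks, cycles -/

/-- A multigraph on vertex type `V` with edge type `E`: each edge has an
unordered pair of endpoints (possibly equal, giving a loop). -/
structure Multigraph (V : Type*) (E : Type*) where
  inc : E → Sym2 V

namespace Multigraph

variable {V E : Type*}

/-- `G.IsWalk I u es vs`: starting at vertex `u` and using only edges in `I`,
the edges `es` form a walk that successively visits the vertices `vs`. -/
inductive IsWalk (G : Multigraph V E) (I : Set E) : V → List E → List V → Prop
  | nil (v : V) : IsWalk G I v [] []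
  | cons {u v : V} {e : E} {es : List E} {vs : List V} :
      e ∈ I → G.inc e = s(u, v) → IsWalk G I v es vs → IsWalk G I u (e :: es) (v :: vs)

/-- A walk from `u` to `w` inside the edge set `I`. -/
def IsWalkFrom (G : Multigraph V E) (I : Set E) (u : V) (es : List E) (vs : List V)
    (w : V) : Prop :=
  G.IsWalk I u es vs ∧ (u :: vs).getLast (by simp) = w

/-- `u` and `w` are joined by a walk using edges of `I` (same component of `G[I]`). -/
def Reachable (G : Multigraph V E) (I : Set E) (u w : V) : Prop :=
  ∃ es vs, G.IsWalkFrom I u es vs w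

/-- A cycle based at `v` using edges of `I`: a nonempty closed walk with no repeated
edges and no repeated vertices (except for the base point).  A loop is a cycle of
length `1` and a pair of parallel edges forms a cycle of length `2`. -/
def IsCycle (G : Multigraph V E) (I : Set E) (v : V) (es : List E) (vs : List V) : Prop :=
  G.IsWalkFrom I v es vs v ∧ es ≠ [] ∧ es.Nodup ∧ vs.Nodup

/-- `C` is the edge set of a cycle of the subgraph `G[I]`. -/
def IsCycleIn (G : Multigraph V E) (I : Set E) (C : Set E) : Prop :=
  ∃ v es vs, G.IsCycle I v es vs ∧ C = {e | e ∈ es}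

/-- A path from `u` to `w`: a walk with pairwise distinct vertices. -/
def IsPath (G : Multigraph V E) (I : Set E) (u : V) (es : List E) (vs : List V)
    (w : V) : Prop :=
  G.IsWalkFrom I u es vs w ∧ (u :: vs).Nodup

/-- The vertices covered by an edge set `D`; the vertex set of `G[D]`. -/
def verts (G : Multigraph V E) (D : Set E) : Set V := {v | ∃ e ∈ D, v ∈ G.inc e}

/-- The degree of `v` in the subgraph `G[D]` (loops count twice). -/
noncomputable def degree (G : Multigraph V E) (D : Set E) (v : V) : ℕ :=
  {e ∈ D | v ∈ G.inc e}.ncard + {e ∈ D | G.inc e = s(v, v)}.ncard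

/-- Every connected component of `G[I]` contains at most one cycle:
any two cycles of `G[I]` lying in the same component coincide. -/
def BicircIndep (G : Multigraph V E) (I : Set E) : Prop :=
  ∀ C₁ C₂ : Set E, G.IsCycleIn I C₁ → G.IsCycleIn I C₂ →
    (∃ u w, u ∈ G.verts C₁ ∧ w ∈ G.verts C₂ ∧ G.Reachable I u w) → C₁ = C₂

/-- `M` is the bicircular matroid `B(G)` of the multigraph `G`. -/
def IsBicircularOf (G : Multigraph V E) (M : Matroid E) : Prop :=
  M.E = univ ∧ ∀ I : Set E, M.Indep I ↔ G.BicircIndep I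

end Multigraph

namespace Multigraph

variable {V E : Type*}

variable {G : Multigraph V E} {I J : Set E} {u v w x y z : V}
  {e f g : E} {es es' es₁ es₂ : List E} {vs vs' vs₁ vs₂ : List V}
lemma getLast_cons_eq_getLastD : ∀ (vs : List V) (u : V),
    (u :: vs).getLast (by simp) = vs.getLastD u
  | [], _ => rfl
  | a :: t, u => by
    rw [List.getLast_cons (by simp : a :: t ≠ []), List.getLastD_cons]
    exact getLast_cons_eq_getLastD t a
lemma isWalkFrom_iff :
    G.IsWalkFrom I u es vs w ↔ G.IsWalk I u es vs ∧ vs.getLastD u = w := by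
  rw [IsWalkFrom, getLast_cons_eq_getLastD]
lemma IsWalk.length_eq (h : G.IsWalk I u es vs) : vs.length = es.length := by
  induction h with
  | nil => rfl
  | cons _ _ _ ih => simpa using ih
lemma IsWalk.edges_mem (h : G.IsWalk I u es vs) : ∀ e ∈ es, e ∈ I := by
  induction h with
  | nil => simp
  | cons he _ _ ih => simpa using ⟨he, ih⟩
lemma IsWalk.mono (h : G.IsWalk I u es vs) (hIJ : I ⊆ J) : G.IsWalk J u es vs := by
  induction h with
  | nil => exact .nil _
  | cons he hinc _ ih => exact .cons (hIJ he) hinc ih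
lemma IsWalk.restrict (h : G.IsWalk I u es vs) (hJ : ∀ e ∈ es, e ∈ J) :
    G.IsWalk J u es vs := by
  induction h with
  | nil => exact .nil _
  | cons he hinc _ ih =>
      exact .cons (hJ _ (by simp)) hinc (ih fun e he => hJ e (by simp [he]))
lemma IsWalk.append (h : G.IsWalk I u es vs) (h' : G.IsWalk I (vs.getLastD u) es' vs') :
    G.IsWalk I u (es ++ es') (vs ++ vs') := by
  induction h with
  | nil => simpa using h'
  | cons he hinc _ ih =>
      exact .cons he hinc (ih (by rwa [List.getLastD_cons] at h'))
lemma IsWalk.single (he : e ∈ I) (hinc : G.inc e = s(u, v)) :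
    G.IsWalk I u [e] [v] := .cons he hinc (.nil v)

-- ######## chunk 2 ########

lemma getLastD_append' (vs₁ vs₂ : List V) (u : V) (h : vs₂ ≠ []) :
    (vs₁ ++ vs₂).getLastD u = vs₂.getLastD u := by
  cases vs₂ with
  | nil => simp at h
  | cons a t =>
      simp only [List.getLastD_eq_getLast?, List.getLast?_append_of_ne_nil _ h]

lemma getLastD_mem_cons' (l : List V) (d : V) : l.getLastD d ∈ d :: l :=
  List.getLastD_mem_cons

lemma getLastD_mem (l : List V) (d : V) (h : l ≠ []) : l.getLastD d ∈ l := by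
  cases l with
  | nil => simp at h
  | cons a t =>
      rw [List.getLastD_cons]
      exact getLastD_mem_cons' t a

lemma IsWalk.split_vertex (h : G.IsWalk I u es vs) (hvs : vs = vs₁ ++ x :: vs₂) :
    ∃ es₁ e es₂, es = es₁ ++ e :: es₂ ∧ es₁.length = vs₁.length ∧
      G.IsWalk I u es₁ vs₁ ∧ e ∈ I ∧ G.inc e = s(vs₁.getLastD u, x) ∧
      G.IsWalk I x es₂ vs₂ := by
  induction h generalizing vs₁ with
  | nil => simp at hvs
  | @cons u' v' e' es' vs'' he hinc hw ih =>
      cases vs₁ with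
      | nil =>
          simp only [List.nil_append, List.cons.injEq] at hvs
          obtain ⟨rfl, rfl⟩ := hvs
          exact ⟨[], e', es', rfl, rfl, .nil _, he, by simpa using hinc, hw⟩
      | cons a t =>
          simp only [List.cons_append, List.cons.injEq] at hvs
          obtain ⟨rfl, h2⟩ := hvs
          obtain ⟨es₁', e₁, es₂', rfl, hlen, hw1, he1, hinc1, hw2⟩ := ih h2
          exact ⟨e' :: es₁', e₁, es₂', rfl, by simp [hlen],
            .cons he hinc hw1, he1, by rwa [List.getLastD_cons], hw2⟩

lemma IsWalk.split_edge (h : G.IsWalk I u es vs) (hes : es = es₁ ++ e :: es₂) :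
    ∃ vs₁ b vs₂, vs = vs₁ ++ b :: vs₂ ∧ vs₁.length = es₁.length ∧
      G.IsWalk I u es₁ vs₁ ∧ G.inc e = s(vs₁.getLastD u, b) ∧
      G.IsWalk I b es₂ vs₂ := by
  induction h generalizing es₁ with
  | nil => simp at hes
  | @cons u' v' e' es' vs'' he hinc hw ih =>
      cases es₁ with
      | nil =>
          simp only [List.nil_append, List.cons.injEq] at hes
          obtain ⟨rfl, rfl⟩ := hes
          exact ⟨[], v', vs'', rfl, rfl, .nil _, by simpa using hinc, hw⟩
      | cons a t =>
          simp only [List.cons_append, List.cons.injEq] at hes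
          obtain ⟨rfl, h2⟩ := hes
          obtain ⟨vs₁', b, vs₂', rfl, hlen, hw1, hinc1, hw2⟩ := ih h2
          exact ⟨v' :: vs₁', b, vs₂', rfl, by simp [hlen],
            .cons he hinc hw1, by rwa [List.getLastD_cons], hw2⟩

lemma IsWalk.mem_of_mem_inc (h : G.IsWalk I u es vs) (he : e ∈ es) (hx : x ∈ G.inc e) :
    x ∈ u :: vs := by
  obtain ⟨es₁, es₂, rfl⟩ := List.append_of_mem he
  obtain ⟨vs₁, b, vs₂, rfl, _, _, hinc, _⟩ := h.split_edge rfl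
  rw [hinc, Sym2.mem_iff] at hx
  rcases hx with h1 | h1 <;> rw [h1]
  · rcases List.mem_cons.1 (getLastD_mem_cons' vs₁ u) with h2 | h2
    · rw [h2]; exact List.mem_cons_self
    · exact List.mem_cons_of_mem _ (List.mem_append_left _ h2)
  · exact List.mem_cons_of_mem _ (by simp)

lemma Reachable.rfl' : G.Reachable I u u := ⟨[], [], .nil u, rfl⟩

lemma IsWalk.reachable (h : G.IsWalk I u es vs) : G.Reachable I u (vs.getLastD u) :=
  ⟨es, vs, h, getLast_cons_eq_getLastD ..⟩

lemma Reachable.trans (h1 : G.Reachable I u v) (h2 : G.Reachable I v w) :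
    G.Reachable I u w := by
  obtain ⟨es, vs, hw1, hl1⟩ := h1
  obtain ⟨es', vs', hw2, hl2⟩ := h2
  rw [getLast_cons_eq_getLastD] at hl1 hl2
  subst hl1
  refine ⟨es ++ es', vs ++ vs', hw1.append hw2, ?_⟩
  rw [getLast_cons_eq_getLastD]
  cases vs' with
  | nil =>
      simpa using hl2
  | cons a t =>
      rw [getLastD_append' _ _ _ (by simp), ← hl2]
      simp only [← List.getLastD_eq_getLast?, List.getLastD_cons]

lemma reachable_edge (he : e ∈ I) (hinc : G.inc e = s(u, v)) : G.Reachable I u v :=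
  (IsWalk.single he hinc).reachable

lemma reachable_of_mem_inc (he : e ∈ I) (hx : x ∈ G.inc e) (hy : y ∈ G.inc e) :
    G.Reachable I x y := by
  obtain ⟨b, hb⟩ := Sym2.mem_iff_exists.1 hx
  rw [hb, Sym2.mem_iff] at hy
  rcases hy with rfl | rfl
  · exact Reachable.rfl'
  · exact reachable_edge he hb

lemma Reachable.symm (h : G.Reachable I u w) : G.Reachable I w u := by
  obtain ⟨es, vs, hw, hl⟩ := h
  rw [getLast_cons_eq_getLastD] at hl
  subst hl
  induction hw with
  | nil => exact Reachable.rfl'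
  | @cons u' v' e' es' vs' he hinc _ ih =>
      rw [List.getLastD_cons]
      exact ih.trans (reachable_edge he (by rw [hinc, Sym2.eq_swap]))

lemma IsWalk.reachable_of_visited (h : G.IsWalk I u es vs) (hx : x ∈ u :: vs) :
    G.Reachable I u x ∧ G.Reachable I x (vs.getLastD u) := by
  rcases List.mem_cons.1 hx with rfl | hx'
  · exact ⟨Reachable.rfl', h.reachable⟩
  · obtain ⟨vs₁, vs₂, rfl⟩ := List.append_of_mem hx'
    obtain ⟨es₁, e₁, es₂, rfl, _, hw1, he1, hinc1, hw2⟩ := h.split_vertex rfl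
    constructor
    · exact hw1.reachable.trans (reachable_edge he1 hinc1)
    · have := hw2.reachable
      rwa [getLastD_append' _ _ _ (by simp), List.getLastD_cons]

lemma IsWalk.nodup_edges (h : G.IsWalk I u es vs) (hn : (u :: vs).Nodup) : es.Nodup := by
  induction h with
  | nil => simp
  | @cons u' v' e' es' vs' he hinc hw ih =>
      rw [List.nodup_cons] at hn ⊢
      refine ⟨fun hmem => ?_, ih hn.2⟩
      exact hn.1 (hw.mem_of_mem_inc hmem (by rw [hinc]; exact Sym2.mem_mk_left _ _))

lemma IsWalk.to_nodup (h : G.IsWalk I u es vs) :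
    ∃ es' vs', G.IsWalk I u es' vs' ∧ vs'.getLastD u = vs.getLastD u ∧
      (u :: vs').Nodup := by
  induction h with
  | nil => exact ⟨[], [], .nil _, rfl, by simp⟩
  | @cons u' v' e' es' vs' he hinc hw ih =>
      obtain ⟨es'', vs'', hw'', hend, hnd⟩ := ih
      by_cases hu : u' ∈ v' :: vs''
      · rcases List.mem_cons.1 hu with rfl | hu'
        · exact ⟨es'', vs'', hw'', by rw [hend, List.getLastD_cons], hnd⟩
        · obtain ⟨vs₁, vs₂, rfl⟩ := List.append_of_mem hu'
          obtain ⟨es₁, e₁, es₂, rfl, _, _, _, _, hw2⟩ := hw''.split_vertex rfl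
          refine ⟨es₂, vs₂, hw2, ?_, ?_⟩
          · rw [List.getLastD_cons, ← hend, getLastD_append' _ _ _ (by simp),
              List.getLastD_cons]
          · have h2 := hnd.of_cons
            rw [List.nodup_append] at h2
            exact h2.2.1
      · exact ⟨e' :: es'', v' :: vs'', .cons he hinc hw'',
          by rw [List.getLastD_cons, List.getLastD_cons, hend], by simp [hnd, hu]⟩

-- ######## chunk 3 ########

lemma IsWalk.eq_concat_of_inc_last (h : G.IsWalk I u es vs) (hn : (u :: vs).Nodup)
    (he : e ∈ es) (hw : vs.getLastD u ∈ G.inc e) : ∃ es₁, es = es₁ ++ [e] := by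
  obtain ⟨es₁, es₂, rfl⟩ := List.append_of_mem he
  obtain ⟨vs₁, b, vs₂, rfl, _, hw1, hinc, hw2⟩ := h.split_edge rfl
  have hL : (vs₁ ++ b :: vs₂).getLastD u = vs₂.getLastD b := by
    rw [getLastD_append' _ _ _ (by simp), List.getLastD_cons]
  rw [hL] at hw
  rw [show u :: (vs₁ ++ b :: vs₂) = (u :: vs₁) ++ b :: vs₂ by simp] at hn
  rw [List.nodup_append] at hn
  obtain ⟨hn1, hn2, hdisj⟩ := hn
  rw [hinc, Sym2.mem_iff] at hw
  rcases hw with hw | hw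
  · exfalso
    have h1 : vs₂.getLastD b ∈ u :: vs₁ := hw ▸ getLastD_mem_cons' vs₁ u
    have h2 : vs₂.getLastD b ∈ b :: vs₂ := getLastD_mem_cons' vs₂ b
    exact hdisj _ h1 _ h2 rfl
  · cases vs₂ with
    | nil =>
        have : es₂.length = 0 := by simpa using hw2.length_eq.symm
        rw [List.length_eq_zero_iff] at this
        exact ⟨es₁, by rw [this]⟩
    | cons a t =>
        exfalso
        have h2 : (a :: t).getLastD b ∈ a :: t := getLastD_mem _ _ (by simp)
        rw [hw] at h2
        exact (List.nodup_cons.1 hn2).1 h2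

lemma IsWalk.last_edge (h : G.IsWalk I u es vs) (hne : es ≠ []) :
    ∃ es₁ e, es = es₁ ++ [e] ∧ vs.getLastD u ∈ G.inc e := by
  obtain ⟨es₁, e, hc⟩ := (List.eq_nil_or_concat es).resolve_left hne
  rw [List.concat_eq_append] at hc
  subst hc
  obtain ⟨vs₁, b, vs₂, hvs, _, hw1, hinc, hw2⟩ := h.split_edge rfl
  have h0 : vs₂.length = 0 := by simpa using hw2.length_eq
  rw [List.length_eq_zero_iff] at h0
  subst h0
  refine ⟨es₁, e, rfl, ?_⟩
  rw [hvs, getLastD_append' _ _ _ (by simp), List.getLastD_cons, hinc]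
  simp

lemma IsWalk.two_edges_interior (h : G.IsWalk I u es vs) (hn : (u :: vs).Nodup)
    (hx : x ∈ vs) (hxw : x ≠ vs.getLastD u) :
    ∃ e₁ e₂, e₁ ∈ es ∧ e₂ ∈ es ∧ e₁ ≠ e₂ ∧ x ∈ G.inc e₁ ∧ x ∈ G.inc e₂ := by
  obtain ⟨vs₁, vs₂, rfl⟩ := List.append_of_mem hx
  obtain ⟨es₁, e₁, es₂, rfl, _, hw1, _, hinc1, hw2⟩ := h.split_vertex rfl
  have hvs2 : vs₂ ≠ [] := by
    rintro rfl
    refine hxw ?_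
    rw [getLastD_append' _ _ _ (by simp), List.getLastD_cons]
    simp
  cases es₂ with
  | nil =>
      exfalso
      have h0 : vs₂.length = 0 := by simpa using hw2.length_eq
      rw [List.length_eq_zero_iff] at h0
      exact hvs2 h0
  | cons e₂ rest =>
      cases hw2 with
      | cons he2 hinc2 hw3 =>
          refine ⟨e₁, e₂, by simp, by simp, ?_, by rw [hinc1]; simp, by rw [hinc2]; simp⟩
          have hnd := h.nodup_edges hn
          rw [List.nodup_append] at hnd
          intro hEq
          exact (List.nodup_cons.1 hnd.2.1).1 (hEq ▸ List.mem_cons_self)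

lemma IsCycle.exists_two_edges (hc : G.IsCycle I v es vs) (hx : x ∈ G.inc f)
    (hf : f ∈ es) :
    (∃ e ∈ es, G.inc e = s(x, x)) ∨
      (∃ e₁ e₂, e₁ ∈ es ∧ e₂ ∈ es ∧ e₁ ≠ e₂ ∧ x ∈ G.inc e₁ ∧ x ∈ G.inc e₂) := by
  obtain ⟨⟨hw, hlast⟩, hne, hndE, hndV⟩ := hc
  rw [getLast_cons_eq_getLastD] at hlast
  cases hw with
  | nil => simp at hne
  | @cons _ b₀ e₀ es' vs' he0 hinc0 hw2 =>
      rw [List.getLastD_cons] at hlast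
      cases es' with
      | nil =>
          -- single loop edge
          have : vs'.length = 0 := by simpa using hw2.length_eq
          rw [List.length_eq_zero_iff] at this
          subst this
          simp only [List.getLastD_nil] at hlast
          subst hlast
          left
          refine ⟨e₀, by simp, ?_⟩
          have : f = e₀ := by simpa using hf
          subst this
          rw [hinc0] at hx ⊢
          rw [Sym2.mem_iff] at hx
          rcases hx with rfl | rfl <;> rfl
      | cons e₁ rest =>
          -- at least two edges
          right
          have hndV' : (b₀ :: vs').Nodup := hndV
          have hlast' : vs'.getLastD b₀ = v := hlast
          by_cases hxv : x = v
          · subst hxv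
            -- first edge e₀ and last edge
            obtain ⟨esi, elast, heq, hincl⟩ := hw2.last_edge (by simp)
            refine ⟨e₀, elast, by simp, by simp [heq], ?_, by rw [hinc0]; simp,
              by rwa [hlast'] at hincl⟩
            intro hEq
            rw [List.nodup_cons, heq] at hndE
            exact hndE.1 (hEq ▸ by simp)
          · by_cases hxb : x = b₀
            · subst hxb
              cases hw2 with
              | cons he1 hinc1 hw3 =>
                  refine ⟨e₀, e₁, by simp, by simp, ?_, by rw [hinc0]; simp,
                    by rw [hinc1]; simp⟩
                  intro hEq
                  rw [List.nodup_cons] at hndE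
                  exact hndE.1 (hEq ▸ by simp)
            · -- interior vertex of the tail path
              have hxvs : x ∈ b₀ :: vs' := by
                rcases (by simpa using hf : f = e₀ ∨ f ∈ e₁ :: rest) with rfl | hf'
                · rw [hinc0, Sym2.mem_iff] at hx
                  rcases hx with rfl | rfl
                  · exact absurd rfl hxv
                  · exact List.mem_cons_self
                · exact hw2.mem_of_mem_inc hf' hx
              have hxvs' : x ∈ vs' := by
                rcases List.mem_cons.1 hxvs with rfl | h2
                · exact absurd rfl hxb
                · exact h2
              obtain ⟨f₁, f₂, hf₁, hf₂, hne12, hxf₁, hxf₂⟩ :=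
                hw2.two_edges_interior hndV' hxvs' (by rwa [hlast'])
              exact ⟨f₁, f₂, by simp [hf₁], by simp [hf₂], hne12, hxf₁, hxf₂⟩

-- ######## chunk 4 ########

lemma exists_inc (G : Multigraph V E) (e : E) : ∃ a b, G.inc e = s(a, b) := by
  obtain ⟨⟨a, b⟩, h⟩ := Quot.exists_rep (G.inc e)
  exact ⟨a, b, h.symm⟩

lemma verts_mono (h : I ⊆ J) : G.verts I ⊆ G.verts J :=
  fun _ ⟨e, he, hx⟩ => ⟨e, h he, hx⟩

lemma verts_union (A B : Set E) : G.verts (A ∪ B) = G.verts A ∪ G.verts B := by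
  ext x
  constructor
  · rintro ⟨e, he | he, hx⟩
    · exact Or.inl ⟨e, he, hx⟩
    · exact Or.inr ⟨e, he, hx⟩
  · rintro (⟨e, he, hx⟩ | ⟨e, he, hx⟩)
    · exact ⟨e, Or.inl he, hx⟩
    · exact ⟨e, Or.inr he, hx⟩

lemma verts_finite (hfin : I.Finite) : (G.verts I).Finite := by
  have : G.verts I ⊆ ⋃ e ∈ I, {x | x ∈ G.inc e} := by
    rintro x ⟨e, he, hx⟩
    exact Set.mem_biUnion he hx
  refine Set.Finite.subset (Set.Finite.biUnion hfin fun e _ => ?_) this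
  obtain ⟨a, b, hab⟩ := exists_inc G e
  refine Set.Finite.subset ((Set.finite_singleton b).insert a) ?_
  intro x hx
  rw [Set.mem_setOf_eq, hab, Sym2.mem_iff] at hx
  rcases hx with rfl | rfl <;> simp

lemma mem_verts_of_inc (he : e ∈ I) (hx : x ∈ G.inc e) : x ∈ G.verts I := ⟨e, he, hx⟩

lemma verts_nonempty (hne : I.Nonempty) : (G.verts I).Nonempty := by
  obtain ⟨e, he⟩ := hne
  obtain ⟨a, b, hab⟩ := exists_inc G e
  exact ⟨a, e, he, by rw [hab]; simp⟩

lemma IsWalk.visited_mem (h : G.IsWalk I u es vs) (hne : es ≠ []) (hx : x ∈ u :: vs) :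
    ∃ e ∈ es, x ∈ G.inc e := by
  rcases List.mem_cons.1 hx with rfl | hx'
  · cases h with
    | nil => simp at hne
    | @cons u' v' e' es' vs' he hinc hw => exact ⟨e', by simp, by rw [hinc]; simp⟩
  · obtain ⟨vs₁, vs₂, rfl⟩ := List.append_of_mem hx'
    obtain ⟨es₁, e₁, es₂, rfl, _, _, _, hinc1, _⟩ := h.split_vertex rfl
    exact ⟨e₁, by simp, by rw [hinc1]; simp⟩

lemma length_le_ncard (l : List V) (hl : l.Nodup) (S : Set V) (hS : S.Finite)
    (h : ∀ x ∈ l, x ∈ S) : l.length ≤ S.ncard := by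
  classical
  have h1 : l.toFinset.card = l.length := List.toFinset_card_of_nodup hl
  have h2 : l.toFinset ⊆ hS.toFinset := by
    intro x hx
    rw [Set.Finite.mem_toFinset]
    exact h x (List.mem_toFinset.1 hx)
  have h3 := Finset.card_le_card h2
  rwa [h1, ← Set.ncard_eq_toFinset_card _ hS] at h3

lemma isCycleIn_loop (he : e ∈ I) (hinc : G.inc e = s(x, x)) :
    G.IsCycleIn I {f | f ∈ [e]} :=
  ⟨x, [e], [x], ⟨⟨.cons he hinc (.nil x), by simp⟩, by simp, by simp, by simp⟩, rfl⟩

lemma IsCycleIn.subset (h : G.IsCycleIn I C) : C ⊆ I := by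
  obtain ⟨v, es, vs, ⟨⟨hw, _⟩, _⟩, rfl⟩ := h
  exact fun e he => hw.edges_mem e he

lemma IsCycleIn.mono (h : G.IsCycleIn I C) (hIJ : I ⊆ J) : G.IsCycleIn J C := by
  obtain ⟨v, es, vs, ⟨⟨hw, hl⟩, h1, h2, h3⟩, rfl⟩ := h
  exact ⟨v, es, vs, ⟨⟨hw.mono hIJ, hl⟩, h1, h2, h3⟩, rfl⟩

lemma IsCycleIn.restrict_self (h : G.IsCycleIn I C) : G.IsCycleIn C C := by
  obtain ⟨v, es, vs, ⟨⟨hw, hl⟩, h1, h2, h3⟩, rfl⟩ := h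
  exact ⟨v, es, vs, ⟨⟨hw.restrict (fun e he => he), hl⟩, h1, h2, h3⟩, rfl⟩

lemma IsCycleIn.nonempty (h : G.IsCycleIn I C) : C.Nonempty := by
  obtain ⟨v, es, vs, ⟨⟨hw, hl⟩, h1, h2, h3⟩, rfl⟩ := h
  cases es with
  | nil => simp at h1
  | cons a t => exact ⟨a, by simp⟩

lemma BicircIndep.subset (h : G.BicircIndep I) (hJI : J ⊆ I) : G.BicircIndep J := by
  intro C₁ C₂ h1 h2 ⟨u, w, hu, hw, hr⟩
  obtain ⟨es, vs, hwk, hl⟩ := hr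
  exact h C₁ C₂ (h1.mono hJI) (h2.mono hJI)
    ⟨u, w, hu, hw, es, vs, hwk.mono hJI, hl⟩

/-- Closing a nodup walk with an extra edge gives a cycle. -/
lemma loopback (hp : G.IsWalk I u es vs) (hn : (u :: vs).Nodup) (hg : g ∈ I)
    (hginc : G.inc g = s(vs.getLastD u, z)) (hz : z ∈ u :: vs) (hges : g ∉ es) :
    ∃ C, G.IsCycleIn I C := by
  rcases List.mem_cons.1 hz with rfl | hz'
  · refine ⟨{f | f ∈ es ++ [g]}, z, es ++ [g], vs ++ [z], ⟨⟨?_, ?_⟩, by simp, ?_, ?_⟩, rfl⟩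
    · exact hp.append (IsWalk.single hg hginc)
    · rw [getLast_cons_eq_getLastD, getLastD_append' _ _ _ (by simp), List.getLastD_cons]
      simp
    · rw [List.nodup_append]
      exact ⟨hp.nodup_edges hn, by simp, fun a ha b hb hab => hges (by rw [List.mem_singleton] at hb; subst hb; subst hab; exact ha)⟩
    · rw [List.nodup_append]
      exact ⟨hn.of_cons, by simp, fun a ha b hb hab => (List.nodup_cons.1 hn).1 (by rw [List.mem_singleton] at hb; subst hb; subst hab; exact ha)⟩
  · obtain ⟨vs₁, vs₂, rfl⟩ := List.append_of_mem hz'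
    obtain ⟨es₁, e₁, es₂, rfl, _, _, _, _, hw2⟩ := hp.split_vertex rfl
    have hend : (vs₁ ++ z :: vs₂).getLastD u = vs₂.getLastD z := by
      rw [getLastD_append' _ _ _ (by simp), List.getLastD_cons]
    rw [hend] at hginc
    have hnd2 : (z :: vs₂).Nodup := by
      have := hn.of_cons
      rw [List.nodup_append] at this
      exact this.2.1
    refine ⟨{f | f ∈ es₂ ++ [g]}, z, es₂ ++ [g], vs₂ ++ [z], ⟨⟨?_, ?_⟩, by simp, ?_, ?_⟩, rfl⟩
    · exact hw2.append (IsWalk.single hg hginc)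
    · rw [getLast_cons_eq_getLastD, getLastD_append' _ _ _ (by simp), List.getLastD_cons]
      simp
    · rw [List.nodup_append]
      refine ⟨?_, by simp, ?_⟩
      · have := hp.nodup_edges hn
        rw [List.nodup_append] at this
        exact (List.nodup_cons.1 this.2.1).2
      · exact fun a ha b hb hab => hges (by rw [List.mem_singleton] at hb; subst hb; subst hab; simp [ha])
    · rw [List.nodup_append]
      exact ⟨hnd2.of_cons, by simp, fun a ha b hb hab => (List.nodup_cons.1 hnd2).1 (by rw [List.mem_singleton] at hb; subst hb; subst hab; exact ha)⟩

/-- Path-growing: a nodup walk in a "min-degree ≥ 2" edge set leads to a cycle. -/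
lemma grow_step (hfin : I.Finite)
    (h2 : ∀ f ∈ I, ∀ x ∈ G.inc f, x ∈ G.verts (I \ {f}))
    (hw : G.IsWalk I u es vs) (hn : (u :: vs).Nodup) (hne : es ≠ []) :
    (∃ C, G.IsCycleIn I C) ∨
      ∃ g z, g ∈ I ∧ g ∉ es ∧ G.inc g = s(vs.getLastD u, z) ∧ z ∉ u :: vs := by
  obtain ⟨es₁, h, hc, hinch⟩ := hw.last_edge hne
  have hhI : h ∈ I := hw.edges_mem _ (by simp [hc])
  obtain ⟨g, hgI, hing⟩ := h2 h hhI _ hinch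
  obtain ⟨hgI', hgh⟩ : g ∈ I ∧ g ≠ h := ⟨hgI.1, by simpa using hgI.2⟩
  obtain ⟨z, hz⟩ := Sym2.mem_iff_exists.1 hing
  have hges : g ∉ es := by
    intro hmem
    obtain ⟨es₂, hc2⟩ := hw.eq_concat_of_inc_last hn hmem hing
    apply hgh
    have := congrArg List.getLast? (hc2.symm.trans hc)
    simpa using this
  by_cases hzin : z ∈ u :: vs
  · exact Or.inl (loopback hw hn hgI' hz hzin hges)
  · exact Or.inr ⟨g, z, hgI', hges, hz, hzin⟩

lemma grow (hfin : I.Finite)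
    (h2 : ∀ f ∈ I, ∀ x ∈ G.inc f, x ∈ G.verts (I \ {f})) :
    ∀ n (u : V) (es : List E) (vs : List V), G.IsWalk I u es vs → (u :: vs).Nodup →
      es ≠ [] → (G.verts I).ncard ≤ n + (u :: vs).length → ∃ C, G.IsCycleIn I C := by
  intro n
  induction n with
  | zero =>
      intro u es vs hw hn hne hcard
      rcases grow_step hfin h2 hw hn hne with hC | ⟨g, z, hgI, hges, hz, hzin⟩
      · exact hC
      · exfalso
        have hlen := length_le_ncard ((u :: vs) ++ [z]) ?_ (G.verts I) (verts_finite hfin) ?_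
        · simp only [List.length_append, List.length_cons, List.length_singleton] at hlen
          simp only [List.length_cons] at hcard
          omega
        · rw [List.nodup_append]
          exact ⟨hn, by simp, fun a ha b hb hab => hzin (by rw [List.mem_singleton] at hb; subst hb; subst hab; exact ha)⟩
        · intro x hx
          rcases List.mem_append.1 hx with hx' | hx'
          · obtain ⟨e', he', hxe⟩ := hw.visited_mem hne hx'
            exact mem_verts_of_inc (hw.edges_mem _ he') hxe
          · have : x = z := by simpa using hx'
            subst this
            exact mem_verts_of_inc hgI (by rw [hz]; simp)
  | succ n ih =>
      intro u es vs hw hn hne hcard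
      rcases grow_step hfin h2 hw hn hne with hC | ⟨g, z, hgI, hges, hz, hzin⟩
      · exact hC
      · refine ih u (es ++ [g]) (vs ++ [z]) (hw.append (IsWalk.single hgI hz)) ?_
          (by simp) ?_
        · rw [show u :: (vs ++ [z]) = (u :: vs) ++ [z] by simp, List.nodup_append]
          exact ⟨hn, by simp, fun a ha b hb hab => hzin (by rw [List.mem_singleton] at hb; subst hb; subst hab; exact ha)⟩
        · simp only [List.length_cons, List.length_append, List.length_singleton] at hcard ⊢
          omega

/-- In a nonempty finite edge set of "minimum degree ≥ 2", there is a cycle. -/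
lemma exists_cycle_min2 (hfin : I.Finite) (hne : I.Nonempty)
    (h2 : ∀ f ∈ I, ∀ x ∈ G.inc f, x ∈ G.verts (I \ {f})) :
    ∃ C, G.IsCycleIn I C := by
  obtain ⟨e, he⟩ := hne
  obtain ⟨a, b, hab⟩ := exists_inc G e
  by_cases hloop : a = b
  · subst hloop
    exact ⟨_, isCycleIn_loop he hab⟩
  · exact grow hfin h2 ((G.verts I).ncard) a [e] [b]
      (IsWalk.single he hab) (by simp [hloop]) (by simp) (by simp)

-- ######## chunk 5 ########

lemma exists_cycle_card : ∀ n (X : Set E), X.Finite → X.ncard ≤ n → X.Nonempty →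
    (G.verts X).ncard ≤ X.ncard → ∃ C, G.IsCycleIn X C := by
  intro n
  induction n with
  | zero =>
      intro X hfin hle hne _
      rw [Nat.le_zero, Set.ncard_eq_zero hfin] at hle
      exact absurd hle (Set.nonempty_iff_ne_empty.1 hne)
  | succ n ih =>
      intro X hfin hle hne hcard
      by_cases h2 : ∀ f ∈ X, ∀ x ∈ G.inc f, x ∈ G.verts (X \ {f})
      · exact exists_cycle_min2 hfin hne h2
      · push_neg at h2
        obtain ⟨f, hfX, x, hx, hxv⟩ := h2
        by_cases hne' : (X \ {f}).Nonempty
        · have hcard' : (X \ {f}).ncard = X.ncard - 1 :=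
            Set.ncard_diff_singleton_of_mem hfX
          have hXpos : 1 ≤ X.ncard := (Set.ncard_pos hfin).2 hne
          have hvlt : (G.verts (X \ {f})).ncard < (G.verts X).ncard := by
            refine Set.ncard_lt_ncard ?_ (verts_finite hfin)
            constructor
            · exact verts_mono Set.diff_subset
            · intro hsub
              exact hxv (hsub ⟨f, hfX, hx⟩)
          obtain ⟨C, hC⟩ := ih (X \ {f}) (hfin.diff) (by omega) hne' (by omega)
          exact ⟨C, hC.mono Set.diff_subset⟩
        · rw [Set.not_nonempty_iff_eq_empty, Set.diff_eq_empty] at hne'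
          have hXf : X = {f} := le_antisymm hne' (by simpa using hfX)
          subst hXf
          obtain ⟨a, b, hab⟩ := exists_inc G f
          by_cases hloop : a = b
          · subst hloop
            exact ⟨_, isCycleIn_loop rfl hab⟩
          · exfalso
            have hsub : {a, b} ⊆ G.verts {f} := by
              rintro y (rfl | rfl)
              · exact ⟨f, rfl, by rw [hab]; simp⟩
              · exact ⟨f, rfl, by rw [hab]; simp⟩
            have h2 := Set.ncard_le_ncard hsub (verts_finite (Set.finite_singleton f))
            rw [Set.ncard_pair hloop] at h2
            simp only [Set.ncard_singleton] at hcard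
            omega

lemma dep_of_card : ∀ n (X : Set E), X.Finite → X.ncard ≤ n →
    (∀ u w, u ∈ G.verts X → w ∈ G.verts X → G.Reachable X u w) →
    (G.verts X).ncard + 1 ≤ X.ncard → ¬ G.BicircIndep X := by
  intro n
  induction n with
  | zero => intro X _ hle _ hcard; omega
  | succ n ih =>
      intro X hfin hle hconn hcard
      have hXne : X.Nonempty := by
        rw [Set.nonempty_iff_ne_empty]
        rintro rfl
        simp at hcard
      have hvne : (G.verts X).Nonempty := verts_nonempty hXne
      have hvfin : (G.verts X).Finite := verts_finite hfin
      have hv1 : 1 ≤ (G.verts X).ncard := (Set.ncard_pos hvfin).2 hvne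
      by_cases h2 : ∀ f ∈ X, ∀ x ∈ G.inc f, x ∈ G.verts (X \ {f})
      · obtain ⟨C₁, hC₁⟩ := exists_cycle_min2 hfin hXne h2
        obtain ⟨f, hf⟩ := hC₁.nonempty
        have hfX : f ∈ X := hC₁.subset hf
        have hcard' : (X \ {f}).ncard = X.ncard - 1 :=
          Set.ncard_diff_singleton_of_mem hfX
        have hvle : (G.verts (X \ {f})).ncard ≤ (G.verts X).ncard :=
          Set.ncard_le_ncard (verts_mono Set.diff_subset) hvfin
        have hne' : (X \ {f}).Nonempty := by
          rw [← Set.nonempty_coe_sort, Set.nonempty_coe_sort, ← Set.ncard_pos (hfin.diff)]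
          omega
        obtain ⟨C₂, hC₂⟩ := exists_cycle_card (G := G) (X \ {f}).ncard (X \ {f}) (hfin.diff)
          le_rfl hne' (by omega)
        intro hind
        have hne12 : C₁ ≠ C₂ := by
          intro hEq
          exact (hC₂.subset (hEq ▸ hf)).2 rfl
        obtain ⟨u, hu⟩ := verts_nonempty hC₁.nonempty
        obtain ⟨w, hw⟩ := verts_nonempty hC₂.nonempty
        refine hne12 (hind C₁ C₂ hC₁ (hC₂.mono Set.diff_subset) ⟨u, w, hu, hw, ?_⟩)
        exact hconn u w (verts_mono hC₁.subset hu)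
          (verts_mono (hC₂.subset.trans Set.diff_subset) hw)
      · push_neg at h2
        obtain ⟨f, hfX, x, hx, hxv⟩ := h2
        set X' := X \ {f} with hX'
        have hxX : x ∈ G.verts X := ⟨f, hfX, hx⟩
        have hcard' : X'.ncard = X.ncard - 1 := Set.ncard_diff_singleton_of_mem hfX
        have hvlt : (G.verts X').ncard < (G.verts X).ncard := by
          refine Set.ncard_lt_ncard ⟨verts_mono Set.diff_subset, fun hsub => ?_⟩ hvfin
          exact hxv (hsub hxX)
        -- connectivity of X'
        have hconn' : ∀ u w, u ∈ G.verts X' → w ∈ G.verts X' → G.Reachable X' u w := by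
          intro u w hu hw
          obtain ⟨es, vs, hwk, hl⟩ := hconn u w (verts_mono Set.diff_subset hu)
            (verts_mono Set.diff_subset hw)
          rw [getLast_cons_eq_getLastD] at hl
          obtain ⟨es', vs', hw', hend, hnd⟩ := hwk.to_nodup
          have hfes : f ∉ es' := by
            intro hmem
            have hxvs : x ∈ u :: vs' := hw'.mem_of_mem_inc hmem hx
            have hxu : x ≠ u := fun hEq => hxv (hEq ▸ hu)
            have hxw : x ≠ vs'.getLastD u := by
              intro hEq
              rw [hend, hl] at hEq
              exact hxv (hEq ▸ hw)
            obtain ⟨e₁, e₂, he₁, he₂, hne12, hx1, hx2⟩ :=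
              hw'.two_edges_interior hnd (by
                rcases List.mem_cons.1 hxvs with h' | h'
                · exact absurd h' hxu
                · exact h') hxw
            by_cases h1f : e₁ = f
            · subst h1f
              exact hxv ⟨e₂, ⟨hw'.edges_mem _ he₂, fun hEq => hne12 hEq.symm⟩, hx2⟩
            · exact hxv ⟨e₁, ⟨hw'.edges_mem _ he₁, h1f⟩, hx1⟩
          refine ⟨es', vs', hw'.restrict fun e he => ⟨hw'.edges_mem _ he, ?_⟩,
            by rw [getLast_cons_eq_getLastD, hend, hl]⟩
          rintro rfl
          exact hfes he
        intro hind
        exact ih X' (hfin.diff) (by omega) hconn' (by omega) (hind.subset Set.diff_subset)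

lemma ncard_le_verts_of_indep : ∀ n (X : Set E), X.Finite → X.ncard ≤ n →
    G.BicircIndep X → X.ncard ≤ (G.verts X).ncard := by
  intro n
  induction n with
  | zero => intro X _ hle _; omega
  | succ n ih =>
      intro X hfin hle hind
      rcases X.eq_empty_or_nonempty with rfl | ⟨e, he⟩
      · simp
      · obtain ⟨a, b, hab⟩ := exists_inc G e
        set K := {f ∈ X | ∃ p q, p ∈ G.inc e ∧ q ∈ G.inc f ∧ G.Reachable X p q} with hK
        have hKsub : K ⊆ X := fun f hf => hf.1
        have heK : e ∈ K := ⟨he, a, a, by rw [hab]; simp, by rw [hab]; simp, Reachable.rfl'⟩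
        have walkK : ∀ {u : V} {es : List E} {vs : List V}, G.IsWalk X u es vs →
            (∃ p, p ∈ G.inc e ∧ G.Reachable X p u) → G.IsWalk K u es vs := by
          intro u es vs hw
          induction hw with
          | nil => exact fun _ => .nil _
          | @cons u' v' e' es' vs' he' hinc hw' ih' =>
              rintro ⟨p, hp, hpu⟩
              refine .cons ⟨he', p, u', hp, by rw [hinc]; simp, hpu⟩ hinc
                (ih' ⟨p, hp, hpu.trans (reachable_edge he' hinc)⟩)
        have hconnK : ∀ u w, u ∈ G.verts K → w ∈ G.verts K → G.Reachable K u w := by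
          rintro u w ⟨f, hfK, hu⟩ ⟨f', hf'K, hw⟩
          obtain ⟨hfX, p, q, hp, hq, hpq⟩ := hfK
          obtain ⟨hf'X, p', q', hp', hq', hpq'⟩ := hf'K
          have h1 : G.Reachable X p u := hpq.trans (reachable_of_mem_inc hfX hq hu)
          have h2 : G.Reachable X p w :=
            (reachable_of_mem_inc he hp hp').trans
              (hpq'.trans (reachable_of_mem_inc hf'X hq' hw))
          obtain ⟨es, vs, hwk, hl⟩ := h1.symm.trans h2
          exact ⟨es, vs, walkK hwk ⟨p, hp, h1⟩, hl⟩
        have hK1 : K.ncard ≤ (G.verts K).ncard := by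
          by_contra hlt
          exact dep_of_card K.ncard K (hfin.subset hKsub) le_rfl hconnK (by omega)
            (hind.subset hKsub)
        have hdisj : Disjoint (G.verts K) (G.verts (X \ K)) := by
          rw [Set.disjoint_left]
          rintro y ⟨f, hfK, hyf⟩ ⟨f', hf'd, hyf'⟩
          obtain ⟨hfX, p, q, hp, hq, hpq⟩ := hfK
          exact hf'd.2 ⟨hf'd.1, p, y, hp,
            hyf', hpq.trans (reachable_of_mem_inc hfX hq hyf)⟩
        have hvu : G.verts X = G.verts K ∪ G.verts (X \ K) := by
          rw [← verts_union, Set.union_diff_cancel hKsub]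
        have hsplit : K.ncard + (X \ K).ncard = X.ncard := by
          rw [add_comm]
          exact Set.ncard_diff_add_ncard_of_subset hKsub hfin
        have hKpos : 1 ≤ K.ncard := (Set.ncard_pos (hfin.subset hKsub)).2 ⟨e, heK⟩
        have ihX := ih (X \ K) (hfin.diff) (by omega) (hind.subset Set.diff_subset)
        have hcupcard : (G.verts K ∪ G.verts (X \ K)).ncard =
            (G.verts K).ncard + (G.verts (X \ K)).ncard :=
          Set.ncard_union_eq hdisj (verts_finite (hfin.subset hKsub)) (verts_finite (hfin.diff))
        rw [hvu, hcupcard]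
        omega

-- ######## chunk 6 : degree counting ########
open scoped Classical

lemma degree_filter_eq (hfin : D.Finite) (v : V) :
    G.degree D v = (hfin.toFinset.filter (fun e => v ∈ G.inc e)).card +
      (hfin.toFinset.filter (fun e => G.inc e = s(v, v))).card := by
  classical
  have h1 : {e ∈ D | v ∈ G.inc e} = ↑(hfin.toFinset.filter (fun e => v ∈ G.inc e)) := by
    ext e; simp [Set.Finite.mem_toFinset]
  have h2 : {e ∈ D | G.inc e = s(v, v)} =
      ↑(hfin.toFinset.filter (fun e => G.inc e = s(v, v))) := by
    ext e; simp [Set.Finite.mem_toFinset]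
  rw [degree, h1, h2, Set.ncard_coe_finset, Set.ncard_coe_finset]

lemma degree_eq_zero_of_not_mem_verts (hv : v ∉ G.verts D) : G.degree D v = 0 := by
  have h1 : {e ∈ D | v ∈ G.inc e} = ∅ := by
    ext e; simp only [Set.mem_setOf_eq, Set.mem_empty_iff_false, iff_false]
    rintro ⟨he, hve⟩; exact hv ⟨e, he, hve⟩
  have h2 : {e ∈ D | G.inc e = s(v, v)} = ∅ := by
    ext e; simp only [Set.mem_setOf_eq, Set.mem_empty_iff_false, iff_false]
    rintro ⟨he, hve⟩; exact hv ⟨e, he, by rw [hve]; simp⟩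
  rw [degree, h1, h2]; simp

lemma degree_mono (hfin : D.Finite) (hsub : C ⊆ D) (v : V) :
    G.degree C v ≤ G.degree D v := by
  refine add_le_add ?_ ?_ <;>
    exact Set.ncard_le_ncard (fun e he => ⟨hsub he.1, he.2⟩)
      (hfin.subset (Set.sep_subset _ _))

lemma degree_add (hfin : (C ∪ D).Finite) (hdisj : Disjoint C D) (v : V) :
    G.degree (C ∪ D) v = G.degree C v + G.degree D v := by
  have key : ∀ P : E → Prop, {e ∈ C ∪ D | P e}.ncard = {e ∈ C | P e}.ncard + {e ∈ D | P e}.ncard := by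
    intro P
    rw [show {e ∈ C ∪ D | P e} = {e ∈ C | P e} ∪ {e ∈ D | P e} by ext e; by_cases he : P e <;> simp [he] <;> tauto]
    exact Set.ncard_union_eq (hdisj.mono (Set.sep_subset _ _) (Set.sep_subset _ _))
      (hfin.subset (by intro e he; exact Or.inl he.1)) (hfin.subset (by intro e he; exact Or.inr he.1))
  rw [degree, degree, degree, key, key]
  ring

lemma two_le_degree_of_loop (he : e ∈ D) (hinc : G.inc e = s(v, v)) (hfin : D.Finite) :
    2 ≤ G.degree D v := by
  have h1 : 1 ≤ {e ∈ D | v ∈ G.inc e}.ncard :=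
    (Set.ncard_pos (hfin.subset (Set.sep_subset _ _))).2 ⟨e, he, by rw [hinc]; simp⟩
  have h2 : 1 ≤ {e ∈ D | G.inc e = s(v, v)}.ncard :=
    (Set.ncard_pos (hfin.subset (Set.sep_subset _ _))).2 ⟨e, he, hinc⟩
  rw [degree]; omega

lemma two_le_degree_of_two_edges (he₁ : e ∈ D) (he₂ : f ∈ D) (hne : e ≠ f)
    (h1 : v ∈ G.inc e) (h2 : v ∈ G.inc f) (hfin : D.Finite) : 2 ≤ G.degree D v := by
  have : {e, f} ⊆ {e ∈ D | v ∈ G.inc e} := by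
    rintro g (rfl | rfl) <;> exact ⟨by assumption, by assumption⟩
  have hcard := Set.ncard_le_ncard this (hfin.subset (Set.sep_subset _ _))
  rw [Set.ncard_pair hne] at hcard
  rw [degree]; omega

lemma one_le_degree_of_mem_verts (hv : v ∈ G.verts D) (hfin : D.Finite) :
    1 ≤ G.degree D v := by
  obtain ⟨e, he, hve⟩ := hv
  have h1 : 1 ≤ {e ∈ D | v ∈ G.inc e}.ncard :=
    (Set.ncard_pos (hfin.subset (Set.sep_subset _ _))).2 ⟨e, he, hve⟩
  rw [degree]; omega

/-- The handshake lemma. -/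
lemma handshake (hfin : D.Finite) :
    ∑ v ∈ (verts_finite (G := G) hfin).toFinset, G.degree D v = 2 * D.ncard := by
  classical
  set S := (verts_finite (G := G) hfin).toFinset with hS
  have hmemS : ∀ v, v ∈ S ↔ v ∈ G.verts D := fun v => Set.Finite.mem_toFinset _
  have hmemF : ∀ e, e ∈ hfin.toFinset ↔ e ∈ D := fun e => Set.Finite.mem_toFinset _
  have step1 : ∑ v ∈ S, G.degree D v =
      ∑ e ∈ hfin.toFinset, ((S.filter (fun v => v ∈ G.inc e)).card +
        (S.filter (fun v => G.inc e = s(v, v))).card) := by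
    rw [Finset.sum_congr rfl (fun v _ => degree_filter_eq (G := G) hfin v)]
    simp only [Finset.card_filter]
    rw [Finset.sum_add_distrib]
    rw [show (∑ v ∈ S, ∑ e ∈ hfin.toFinset, if v ∈ G.inc e then (1:ℕ) else 0)
        = ∑ e ∈ hfin.toFinset, ∑ v ∈ S, if v ∈ G.inc e then (1:ℕ) else 0 from
        Finset.sum_comm]
    rw [show (∑ v ∈ S, ∑ e ∈ hfin.toFinset, if G.inc e = s(v, v) then (1:ℕ) else 0)
        = ∑ e ∈ hfin.toFinset, ∑ v ∈ S, if G.inc e = s(v, v) then (1:ℕ) else 0 from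
        Finset.sum_comm]
    rw [← Finset.sum_add_distrib]
  rw [step1]
  have step2 : ∀ e ∈ hfin.toFinset, (S.filter (fun v => v ∈ G.inc e)).card +
      (S.filter (fun v => G.inc e = s(v, v))).card = 2 := by
    intro e he
    obtain ⟨a, b, hab⟩ := exists_inc G e
    have haS : a ∈ S := (hmemS a).2 ⟨e, (hmemF e).1 he, by rw [hab]; simp⟩
    have hbS : b ∈ S := (hmemS b).2 ⟨e, (hmemF e).1 he, by rw [hab]; simp⟩
    by_cases hlp : a = b
    · subst hlp
      have f1 : S.filter (fun v => v ∈ G.inc e) = {a} := by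
        ext v; simp only [Finset.mem_filter, Finset.mem_singleton, hab, Sym2.mem_iff, or_self]
        exact ⟨fun h => h.2, fun h => ⟨h ▸ haS, h⟩⟩
      have f2 : S.filter (fun v => G.inc e = s(v, v)) = {a} := by
        ext v; simp only [Finset.mem_filter, Finset.mem_singleton, hab, Sym2.eq_iff, or_self]
        constructor
        · rintro ⟨_, rfl, _⟩; rfl
        · rintro rfl; exact ⟨haS, rfl, rfl⟩
      rw [f1, f2]; simp
    · have f1 : S.filter (fun v => v ∈ G.inc e) = {a, b} := by
        ext v
        simp only [Finset.mem_filter, Finset.mem_insert, Finset.mem_singleton, hab,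
          Sym2.mem_iff]
        constructor
        · exact fun h => h.2
        · rintro (rfl | rfl)
          · exact ⟨haS, Or.inl rfl⟩
          · exact ⟨hbS, Or.inr rfl⟩
      have f2 : S.filter (fun v => G.inc e = s(v, v)) = ∅ := by
        ext v
        simp only [Finset.mem_filter, hab, Sym2.eq_iff, Finset.notMem_empty, iff_false]
        rintro ⟨_, (⟨rfl, rfl⟩ | ⟨rfl, rfl⟩)⟩ <;> exact hlp rfl
      rw [f1, f2, Finset.card_pair hlp]
      simp
  rw [Finset.sum_congr rfl step2, Finset.sum_const, smul_eq_mul,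
    Set.ncard_eq_toFinset_card _ hfin]
  ring

-- ######## chunk 7 : structure of dependent sets ########

lemma IsCycleIn.reachable_verts (h : G.IsCycleIn J C) (hx : x ∈ G.verts C)
    (hy : y ∈ G.verts C) : G.Reachable J x y := by
  obtain ⟨v, es, vs, ⟨⟨hw, hl⟩, hne, _, _⟩, rfl⟩ := h
  rw [getLast_cons_eq_getLastD] at hl
  have key : ∀ z, z ∈ G.verts {e | e ∈ es} → G.Reachable J v z ∧ G.Reachable J z v := by
    rintro z ⟨f, hf, hzf⟩
    have hzvis : z ∈ v :: vs := hw.mem_of_mem_inc hf hzf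
    obtain ⟨h1, h2⟩ := hw.reachable_of_visited hzvis
    exact ⟨h1, by rwa [hl] at h2⟩
  exact ((key x hx).2).trans (key y hy).1

lemma not_bicircIndep_witness (hdep : ¬ G.BicircIndep X) :
    ∃ C₁ C₂ u w es vs, C₁ ≠ C₂ ∧ G.IsCycleIn X C₁ ∧ G.IsCycleIn X C₂ ∧
      u ∈ G.verts C₁ ∧ w ∈ G.verts C₂ ∧ G.IsWalk X u es vs ∧ (u :: vs).Nodup ∧
      vs.getLastD u = w := by
  rw [BicircIndep] at hdep
  push_neg at hdep
  obtain ⟨C₁, C₂, h1, h2, ⟨u, w, hu, hw, hr⟩, hne⟩ := hdep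
  obtain ⟨es, vs, hwk, hl⟩ := hr
  rw [getLast_cons_eq_getLastD] at hl
  obtain ⟨es', vs', hw', hend, hnd⟩ := hwk.to_nodup
  exact ⟨C₁, C₂, u, w, es', vs', hne, h1, h2, hu, hw, hw', hnd, by rw [hend, hl]⟩

/-- From a dependent set, extract a dependent, connected subset in which every
vertex has degree at least two. -/
lemma dep_structure (hXfin : X.Finite) (hdep : ¬ G.BicircIndep X) :
    ∃ Y, Y ⊆ X ∧ ¬ G.BicircIndep Y ∧
      (∀ p q, p ∈ G.verts Y → q ∈ G.verts Y → G.Reachable Y p q) ∧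
      (∀ x ∈ G.verts Y, 2 ≤ G.degree Y x) := by
  obtain ⟨C₁, C₂, u, w, es, vs, hne, h1, h2, hu, hw, hwk, hnd, hl⟩ :=
    not_bicircIndep_witness hdep
  set W : Set E := {e | e ∈ es} with hW
  set Y : Set E := C₁ ∪ C₂ ∪ W with hY
  have hYX : Y ⊆ X := by
    rintro e ((he | he) | he)
    · exact h1.subset he
    · exact h2.subset he
    · exact hwk.edges_mem e he
  have hYfin : Y.Finite := hXfin.subset hYX
  have hC₁Y : C₁ ⊆ Y := fun e he => Or.inl (Or.inl he)
  have hC₂Y : C₂ ⊆ Y := fun e he => Or.inl (Or.inr he)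
  have hWY : W ⊆ Y := fun e he => Or.inr he
  have hc₁ : G.IsCycleIn Y C₁ := h1.restrict_self.mono hC₁Y
  have hc₂ : G.IsCycleIn Y C₂ := h2.restrict_self.mono hC₂Y
  have hwkY : G.IsWalk Y u es vs := hwk.restrict fun e he => hWY he
  -- connectivity within Y
  have hreach_u : ∀ p, p ∈ G.verts Y → G.Reachable Y p u := by
    intro p hp
    rw [hY, verts_union, verts_union] at hp
    rcases hp with (hp | hp) | hp
    · exact hc₁.reachable_verts hp hu
    · refine (hc₂.reachable_verts hp hw).trans ?_
      have h3 : G.Reachable Y u w := by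
        refine ⟨es, vs, hwkY, ?_⟩
        rw [getLast_cons_eq_getLastD, hl]
      exact h3.symm
    · obtain ⟨f, hf, hpf⟩ := hp
      have hvis : p ∈ u :: vs := hwkY.mem_of_mem_inc hf hpf
      exact (hwkY.reachable_of_visited hvis).1.symm
  have hconn : ∀ p q, p ∈ G.verts Y → q ∈ G.verts Y → G.Reachable Y p q :=
    fun p q hp hq => (hreach_u p hp).trans (hreach_u q hq).symm
  -- dependence of Y
  have hdepY : ¬ G.BicircIndep Y := by
    intro hind
    exact hne (hind C₁ C₂ hc₁ hc₂ ⟨u, w, hu, hw, ⟨es, vs, hwkY,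
      by rw [getLast_cons_eq_getLastD, hl]⟩⟩)
  -- degrees
  refine ⟨Y, hYX, hdepY, hconn, ?_⟩
  intro x hx
  rw [hY, verts_union, verts_union] at hx
  have hcyc_deg : ∀ (C : Set E), G.IsCycleIn Y C → C ⊆ Y → x ∈ G.verts C →
      2 ≤ G.degree Y x := by
    rintro C hC hCY ⟨f, hf, hxf⟩
    obtain ⟨v', es', vs', hcy, hCeq⟩ := hC
    rw [hCeq] at hf
    rcases hcy.exists_two_edges hxf hf with ⟨e', he', hloop⟩ | ⟨e₁, e₂, he₁, he₂, h12, hx1, hx2⟩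
    · exact two_le_degree_of_loop (hCY (hCeq ▸ he' : e' ∈ C)) hloop hYfin
    · exact two_le_degree_of_two_edges (hCY (hCeq ▸ he₁ : e₁ ∈ C))
        (hCY (hCeq ▸ he₂ : e₂ ∈ C)) h12 hx1 hx2 hYfin
  by_cases hx1 : x ∈ G.verts C₁
  · exact hcyc_deg C₁ hc₁ hC₁Y hx1
  by_cases hx2 : x ∈ G.verts C₂
  · exact hcyc_deg C₂ hc₂ hC₂Y hx2
  -- x lies only on the connecting walk, in its interior
  rcases hx with (hx' | hx') | hx'
  · exact absurd hx' hx1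
  · exact absurd hx' hx2
  obtain ⟨f, hf, hxf⟩ := hx'
  have hvis : x ∈ u :: vs := hwk.mem_of_mem_inc hf hxf
  have hxu : x ≠ u := fun hEq => hx1 (hEq ▸ hu)
  have hxw : x ≠ vs.getLastD u := fun hEq => hx2 (by rw [hEq, hl]; exact hw)
  obtain ⟨e₁, e₂, he₁, he₂, h12, ha1, ha2⟩ := hwk.two_edges_interior hnd
    (by rcases List.mem_cons.1 hvis with h' | h'; exact absurd h' hxu; exact h') hxw
  exact two_le_degree_of_two_edges (hWY he₁) (hWY he₂) h12 ha1 ha2 hYfin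

/-- If a walk joins a vertex of `A` to a vertex of `B` inside `A ∪ B`, then some
vertex lies in both vertex sets. -/
lemma exists_boundary_vertex {A B : Set E} :
    ∀ (u : V) (es : List E) (vs : List V), G.IsWalk (A ∪ B) u es vs →
      u ∈ G.verts A → vs.getLastD u ∈ G.verts B →
      ∃ x, x ∈ G.verts A ∧ x ∈ G.verts B := by
  intro u es vs h
  induction h with
  | nil => exact fun hu hw => ⟨_, hu, hw⟩
  | @cons u' v' e' es' vs' he hinc hw ih =>
      intro hu hlast
      rcases he with he | he
      · refine ih ⟨e', he, by rw [hinc]; simp⟩ ?_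
        rwa [List.getLastD_cons] at hlast
      · exact ⟨u', hu, ⟨e', he, by rw [hinc]; simp⟩⟩


lemma Reachable.mono (h : G.Reachable I u w) (hIJ : I ⊆ J) : G.Reachable J u w := by
  obtain ⟨es, vs, hw, hl⟩ := h
  exact ⟨es, vs, hw.mono hIJ, hl⟩

lemma mem_verts_of_degree_pos (hfin : D.Finite) (h : 0 < G.degree D v) :
    v ∈ G.verts D := by
  rw [degree] at h
  have hne : {e ∈ D | v ∈ G.inc e}.Nonempty ∨ {e ∈ D | G.inc e = s(v, v)}.Nonempty := by
    by_cases h1 : {e ∈ D | v ∈ G.inc e}.Nonempty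
    · exact Or.inl h1
    · right
      rw [Set.not_nonempty_iff_eq_empty] at h1
      rw [h1] at h
      simp only [Set.ncard_empty, zero_add] at h
      exact (Set.ncard_pos (hfin.subset (Set.sep_subset _ _))).1 h
  rcases hne with ⟨e, he, hve⟩ | ⟨e, he, hve⟩
  · exact ⟨e, he, hve⟩
  · exact ⟨e, he, by rw [hve]; simp⟩

lemma degree_empty (v : V) : G.degree (∅ : Set E) v = 0 := by
  have h1 : {e ∈ (∅ : Set E) | v ∈ G.inc e} = ∅ := by ext e; simp
  have h2 : {e ∈ (∅ : Set E) | G.inc e = s(v, v)} = ∅ := by ext e; simp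
  rw [degree, h1, h2]
  simp

end Multigraph

/-! ### Matroid notions -/

variable {α : Type*}

/-- The (extended) rank of a set in a matroid. -/
noncomputable def eRk (M : Matroid α) (X : Set α) : ℕ∞ :=
  ⨆ I ∈ {I | M.Indep I ∧ I ⊆ X}, I.encard

/-- A circuit: a minimal dependent set. -/
def Circuit (M : Matroid α) (C : Set α) : Prop :=
  M.Dep C ∧ ∀ D ⊂ C, ¬ M.Dep D

/-- A double circuit: a finite set `D` with `r(D) = |D| - 2` whose rank does not drop
when any single element is removed. -/
def DoubleCircuit (M : Matroid α) (D : Set α) : Prop :=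
  D ⊆ M.E ∧ D.Finite ∧ eRk M D + 2 = D.encard ∧ ∀ d ∈ D, eRk M (D \ {d}) = eRk M D

/-- `f` is a circuit partition of `D`: a partition of `D` into nonempty parts such that the
circuits of `M` contained in `D` are exactly the complements in `D` of the parts. -/
def CircuitPartition (M : Matroid α) (D : Set α) {k : ℕ} (f : Fin k → Set α) : Prop :=
  (∀ i, (f i).Nonempty) ∧ (∀ i j : Fin k, i ≠ j → Disjoint (f i) (f j)) ∧
    (⋃ i, f i) = D ∧ ∀ C : Set α, (Circuit M C ∧ C ⊆ D) ↔ ∃ i, C = D \ f i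

/-- A part of a partition is singular if it has exactly one element. -/
def PositiveDoubleCircuit (M : Matroid α) (D : Set α) : Prop :=
  DoubleCircuit M D ∧ ∃ (k : ℕ) (f : Fin k → Set α), CircuitPartition M D f ∧
    {i : Fin k | (f i).encard ≠ 1}.ncard < {i : Fin k | (f i).encard = 1}.ncard

/-- A hyperplane (copoint): a maximal proper flat. -/
def Hyperplane (M : Matroid α) (H : Set α) : Prop :=
  M.IsFlat H ∧ H ≠ M.E ∧ ∀ F, M.IsFlat F → H ⊂ F → F = M.E

/-- A coline: a flat of rank `r(M) - 2`. -/
def Coline (M : Matroid α) (L : Set α) : Prop :=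
  M.IsFlat L ∧ eRk M L + 2 = eRk M M.E

/-- A positive coline: more simple copoints on `L` than multiple copoints on `L`. -/
def PositiveColine (M : Matroid α) (L : Set α) : Prop :=
  Coline M L ∧
    {H | Hyperplane M H ∧ L ⊆ H ∧ (H \ L).encard ≠ 1}.ncard <
      {H | Hyperplane M H ∧ L ⊆ H ∧ (H \ L).encard = 1}.ncard

/-- Deletion of a set of elements. -/
def delete (M : Matroid α) (D : Set α) : Matroid α := M.restrict (M.E \ D)

/-- Contraction of a set of elements. -/
def contract (M : Matroid α) (C : Set α) : Matroid α := (delete M✶ C)✶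

/-- `N` is a minor of `M`. -/
def IsMinorOf (N M : Matroid α) : Prop := ∃ C D : Set α, N = delete (contract M C) D

/-- `M` is (isomorphic to) the uniform matroid `U_{r,n}`. -/
def IsUniform (r n : ℕ) {β : Type*} (M : Matroid β) : Prop :=
  M.E.encard = n ∧ ∀ I ⊆ M.E, (M.Indep I ↔ I.encard ≤ (r : ℕ∞))

/-- A simple matroid: every set of at most two elements of the ground set is independent. -/
def IsSimple (M : Matroid α) : Prop := ∀ X ⊆ M.E, X.encard ≤ 2 → M.Indep X



/-! ### Auxiliary matroid lemmas -/

section MatroidAux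

variable {M : Matroid α} {I X C C' D S : Set α} {c : ℕ∞}

lemma encard_le_eRk (hI : M.Indep I) (hIX : I ⊆ X) : I.encard ≤ eRk M X :=
  le_biSup _ (show I ∈ {I | M.Indep I ∧ I ⊆ X} from ⟨hI, hIX⟩)

lemma eRk_le (h : ∀ J, M.Indep J → J ⊆ X → J.encard ≤ c) : eRk M X ≤ c :=
  iSup₂_le fun J hJ => h J hJ.1 hJ.2

lemma eRk_attained (hfin : X.Finite) : ∃ I, M.Indep I ∧ I ⊆ X ∧ eRk M X = I.encard := by
  have hSfin : {I | M.Indep I ∧ I ⊆ X}.Finite :=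
    hfin.finite_subsets.subset fun I hI => hI.2
  obtain ⟨I₀, hI₀, hmax⟩ := Set.Finite.exists_maximalFor Set.encard _ hSfin
    ⟨∅, M.empty_indep, Set.empty_subset _⟩
  refine ⟨I₀, hI₀.1, hI₀.2, le_antisymm (eRk_le fun J h1 h2 => ?_)
    (encard_le_eRk hI₀.1 hI₀.2)⟩
  rcases le_or_gt J.encard I₀.encard with h | h
  · exact h
  · exact absurd (hmax ⟨h1, h2⟩ h.le) h.not_ge

lemma Circuit.not_indep (hC : Circuit M C) : ¬ M.Indep C := hC.1.1

lemma Circuit.ssubset_indep (hC : Circuit M C) (hE : M.E = univ) (hS : S ⊂ C) :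
    M.Indep S := by
  by_contra hni
  exact hC.2 S hS ⟨hni, by rw [hE]; exact subset_univ _⟩

lemma Circuit.circ_nonempty (hC : Circuit M C) : C.Nonempty :=
  nonempty_iff_ne_empty.2 fun h => hC.1.1 (h ▸ M.empty_indep)

lemma Circuit.eq_of_dep_subset (hC : Circuit M C) (hE : M.E = univ) (hY : S ⊆ C)
    (hdep : ¬ M.Indep S) : S = C := by
  by_contra hne
  exact hdep (hC.ssubset_indep hE ⟨hY, fun h => hne (le_antisymm hY h)⟩)

lemma Circuit.ne_of_double (hC : Circuit M C) (hD : DoubleCircuit M D) (hE : M.E = univ)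
    (hCD : C ⊆ D) : C ≠ D := by
  rintro rfl
  obtain ⟨_, hDfin, hrk, _⟩ := hD
  obtain ⟨x, hx⟩ := hC.circ_nonempty
  have hind : M.Indep (C \ {x}) :=
    hC.ssubset_indep hE (Set.sdiff_singleton_ssubset.2 hx)
  have h1 : (C \ {x}).encard + 2 ≤ eRk M C + 2 :=
    add_le_add_left (encard_le_eRk hind Set.diff_subset) 2
  rw [hrk, ← Set.encard_diff_singleton_add_one hx] at h1
  have hne0 : (C \ {x}).encard ≠ ⊤ := (hDfin.diff).encard_lt_top.ne
  have h2 := (WithTop.add_le_add_iff_left hne0).1 h1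
  exact absurd (show (2 : ℕ∞) ≤ 1 from h2) (by norm_num)

lemma DoubleCircuit.union_circuits (hD : DoubleCircuit M D) (hE : M.E = univ)
    (hC : Circuit M C) (hC' : Circuit M C') (hCD : C ⊆ D) (hC'D : C' ⊆ D)
    (hne : C ≠ C') : C ∪ C' = D := by
  obtain ⟨_, hDfin, hrk, hdel⟩ := hD
  by_contra hcon
  obtain ⟨x, hxD, hxCC'⟩ := Set.exists_of_ssubset
    (Set.ssubset_iff_subset_ne.2 ⟨Set.union_subset hCD hC'D, hcon⟩)
  have hCC' : ¬ C ⊆ C' := fun hsub =>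
    hC.not_indep (hC'.ssubset_indep hE ⟨hsub, fun h => hne (le_antisymm hsub h)⟩)
  have hint : M.Indep (C ∩ C') :=
    hC.ssubset_indep hE ⟨Set.inter_subset_left, fun h => hCC' (fun y hy => (h hy).2)⟩
  have hintsub : C ∩ C' ⊆ D \ {x} := fun y hy =>
    ⟨hCD hy.1, fun h => (hxCC' (Or.inl (h ▸ hy.1 : _ ∈ C)))⟩
  obtain ⟨J, hJ, hsubJ⟩ := hint.subset_isBasis'_of_subset hintsub
  obtain ⟨I₀, hI₀i, hI₀s, hI₀e⟩ := eRk_attained (M := M) (X := D \ {x}) (hDfin.diff)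
  have hI₀card : I₀.encard + 2 = D.encard := by rw [← hI₀e, hdel x hxD, hrk]
  obtain ⟨J₀, hJ₀, hIJ₀⟩ := hI₀i.subset_isBasis'_of_subset hI₀s
  have hJJ₀ : J.encard = J₀.encard := hJ.encard_eq_encard hJ₀
  obtain ⟨a, haC, haJ⟩ : ∃ a ∈ C, a ∉ J := by
    by_contra h
    push_neg at h
    exact hC.not_indep (hJ.indep.subset h)
  obtain ⟨b, hbC', hbJ⟩ : ∃ b ∈ C', b ∉ J := by
    by_contra h
    push_neg at h
    exact hC'.not_indep (hJ.indep.subset h)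
  have haC' : a ∉ C' := fun h => haJ (hsubJ ⟨haC, h⟩)
  have hbC : b ∉ C := fun h => hbJ (hsubJ ⟨h, hbC'⟩)
  have hab : a ≠ b := fun h => haC' (h ▸ hbC')
  have hins : insert a (insert b J) ⊆ D \ {x} := by
    rintro y (rfl | rfl | hy)
    · exact ⟨hCD haC, fun h => hxCC' (Or.inl (h ▸ haC))⟩
    · exact ⟨hC'D hbC', fun h => hxCC' (Or.inr (h ▸ hbC'))⟩
    · exact hJ.subset hy
  have hcard : (insert a (insert b J)).encard = J.encard + 2 := by
    rw [Set.encard_insert_of_notMem (by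
        rintro (rfl | h)
        · exact hab rfl
        · exact haJ h),
      Set.encard_insert_of_notMem hbJ]
    ring
  have hchain : D.encard ≤ (D \ {x}).encard := by
    calc D.encard = I₀.encard + 2 := hI₀card.symm
      _ ≤ J₀.encard + 2 := add_le_add_left (Set.encard_mono hIJ₀) 2
      _ = J.encard + 2 := by rw [hJJ₀]
      _ = (insert a (insert b J)).encard := hcard.symm
      _ ≤ (D \ {x}).encard := Set.encard_mono hins
  exact absurd hchain (hDfin.diff.encard_lt_encard (Set.sdiff_singleton_ssubset.2 hxD)).not_ge

end MatroidAux

/-- Every double circuit in a bicircular matroid has degree at most `6`,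
i.e. contains at most `6` circuits. -/
theorem bicircular_doubleCircuit_degree_le_six {V E : Type*} (G : Multigraph V E)
    (M : Matroid E) (hM : Multigraph.IsBicircularOf G M) (D : Set E)
    (hD : DoubleCircuit M D) :
    {C : Set E | Circuit M C ∧ C ⊆ D}.encard ≤ 6 := by
  classical
  obtain ⟨hMuniv, hMind⟩ := hM
  have hDfin : D.Finite := hD.2.1
  by_contra hcon
  push_neg at hcon
  have h7 : (7 : ℕ∞) ≤ {C : Set E | Circuit M C ∧ C ⊆ D}.encard := by
    exact_mod_cast Order.add_one_le_of_lt hcon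
  obtain ⟨T, hTS, hTcard⟩ := Set.exists_subset_encard_eq h7
  have hTfin : T.Finite := Set.finite_of_encard_eq_coe (by exact_mod_cast hTcard)
  set 𝒯 : Finset (Set E) := hTfin.toFinset with h𝒯
  have h𝒯card : 𝒯.card = 7 := by
    have h := hTfin.encard_eq_coe_toFinset_card
    rw [hTcard] at h
    exact_mod_cast h.symm
  have hmem𝒯 : ∀ C ∈ 𝒯, Circuit M C ∧ C ⊆ D := fun C hC =>
    hTS ((Set.Finite.mem_toFinset _).1 hC)
  -- graph-level structure of each circuit
  have hstruct : ∀ C, Circuit M C → C ⊆ D →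
      (∀ p q, p ∈ G.verts C → q ∈ G.verts C → G.Reachable C p q) ∧
        (∀ x ∈ G.verts C, 2 ≤ G.degree C x) := by
    intro C hC hCD
    obtain ⟨Y, hYC, hYdep, hYconn, hYdeg⟩ :=
      Multigraph.dep_structure (hDfin.subset hCD)
        (fun h => hC.not_indep ((hMind C).2 h))
    have hYeq : Y = C := hC.eq_of_dep_subset hMuniv hYC (fun hi => hYdep ((hMind Y).1 hi))
    rw [← hYeq]
    exact ⟨hYconn, hYdeg⟩
  have hunion : ∀ C C', Circuit M C → Circuit M C' → C ⊆ D → C' ⊆ D → C ≠ C' →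
      C ∪ C' = D := fun C C' h1 h2 h3 h4 h5 => hD.union_circuits hMuniv h1 h2 h3 h4 h5
  -- pick three distinct circuits
  obtain ⟨C₁, hC₁⟩ := Finset.card_pos.1 (show 0 < 𝒯.card by omega)
  obtain ⟨C₂, hC₂, hne21⟩ := Finset.exists_mem_ne (show 1 < 𝒯.card by omega) C₁
  obtain ⟨C₃, hC₃e⟩ := Finset.card_pos.1 (show 0 < ((𝒯.erase C₁).erase C₂).card by
    have e1 : (𝒯.erase C₁).card = 6 := by rw [Finset.card_erase_of_mem hC₁, h𝒯card]
    have e2 : C₂ ∈ 𝒯.erase C₁ := Finset.mem_erase.2 ⟨hne21, hC₂⟩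
    rw [Finset.card_erase_of_mem e2, e1]
    omega)
  have hC₃ : C₃ ∈ 𝒯 := Finset.mem_of_mem_erase (Finset.mem_of_mem_erase hC₃e)
  have hne32 : C₃ ≠ C₂ := (Finset.mem_erase.1 hC₃e).1
  have hne31 : C₃ ≠ C₁ := (Finset.mem_erase.1 (Finset.mem_of_mem_erase hC₃e)).1
  obtain ⟨hc₁, hc₁D⟩ := hmem𝒯 C₁ hC₁
  obtain ⟨hc₂, hc₂D⟩ := hmem𝒯 C₂ hC₂
  obtain ⟨hc₃, hc₃D⟩ := hmem𝒯 C₃ hC₃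
  have hD12 : C₁ ∪ C₂ = D := hunion C₁ C₂ hc₁ hc₂ hc₁D hc₂D (Ne.symm hne21)
  have hD31 : C₃ ∪ C₁ = D := hunion C₃ C₁ hc₃ hc₁ hc₃D hc₁D hne31
  have hD32 : C₃ ∪ C₂ = D := hunion C₃ C₂ hc₃ hc₂ hc₃D hc₂D hne32
  -- every vertex of D has degree at least 2
  have hdeg2 : ∀ v ∈ G.verts D, 2 ≤ G.degree D v := by
    rintro v ⟨e, heD, hve⟩
    rcases (hD12 ▸ heD : e ∈ C₁ ∪ C₂) with he | he
    · exact le_trans ((hstruct C₁ hc₁ hc₁D).2 v ⟨e, he, hve⟩)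
        (Multigraph.degree_mono hDfin hc₁D v)
    · exact le_trans ((hstruct C₂ hc₂ hc₂D).2 v ⟨e, he, hve⟩)
        (Multigraph.degree_mono hDfin hc₂D v)
  -- a vertex common to C₁ and C₂
  obtain ⟨f₀, hf₀⟩ : (D \ C₃).Nonempty := by
    rw [Set.diff_nonempty]
    exact fun hsub => (hc₃.ne_of_double hD hMuniv hc₃D) (le_antisymm hc₃D hsub)
  have hf₀C₁ : f₀ ∈ C₁ := by
    rcases (hD31 ▸ hf₀.1 : f₀ ∈ C₃ ∪ C₁) with h | h
    · exact absurd h hf₀.2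
    · exact h
  have hf₀C₂ : f₀ ∈ C₂ := by
    rcases (hD32 ▸ hf₀.1 : f₀ ∈ C₃ ∪ C₂) with h | h
    · exact absurd h hf₀.2
    · exact h
  obtain ⟨a₀, b₀, hab₀⟩ := Multigraph.exists_inc G f₀
  have hx₀1 : a₀ ∈ G.verts C₁ := ⟨f₀, hf₀C₁, by rw [hab₀]; simp⟩
  have hx₀2 : a₀ ∈ G.verts C₂ := ⟨f₀, hf₀C₂, by rw [hab₀]; simp⟩
  have hvertsD : G.verts D = G.verts C₁ ∪ G.verts C₂ := by
    rw [← hD12, Multigraph.verts_union]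
  -- connectivity of D
  have hconnD : ∀ p q, p ∈ G.verts D → q ∈ G.verts D → G.Reachable D p q := by
    have hre : ∀ p ∈ G.verts D, G.Reachable D p a₀ := by
      intro p hp
      rcases (hvertsD ▸ hp : p ∈ G.verts C₁ ∪ G.verts C₂) with hp' | hp'
      · exact ((hstruct C₁ hc₁ hc₁D).1 p a₀ hp' hx₀1).mono hc₁D
      · exact ((hstruct C₂ hc₂ hc₂D).1 p a₀ hp' hx₀2).mono hc₂D
    exact fun p q hp hq => (hre p hp).trans (hre q hq).symm
  -- cardinality bound |D| ≤ |V(D)| + 2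
  have hvDfin : (G.verts D).Finite := Multigraph.verts_finite hDfin
  have hnv : D.ncard ≤ (G.verts D).ncard + 2 := by
    have h1 : eRk M D ≤ (G.verts D).encard := by
      refine eRk_le fun J hJ hJD => ?_
      have hJfin : J.Finite := hDfin.subset hJD
      have h2 : J.ncard ≤ (G.verts J).ncard :=
        Multigraph.ncard_le_verts_of_indep J.ncard J hJfin le_rfl ((hMind J).1 hJ)
      have hvJfin : (G.verts J).Finite := Multigraph.verts_finite hJfin
      calc J.encard = (J.ncard : ℕ∞) := by
            rw [hJfin.encard_eq_coe_toFinset_card, Set.ncard_eq_toFinset_card _ hJfin]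
        _ ≤ ((G.verts J).ncard : ℕ∞) := by exact_mod_cast h2
        _ = (G.verts J).encard := by
            rw [hvJfin.encard_eq_coe_toFinset_card, Set.ncard_eq_toFinset_card _ hvJfin]
        _ ≤ (G.verts D).encard := Set.encard_mono (Multigraph.verts_mono hJD)
    have h3 : D.encard ≤ (G.verts D).encard + 2 := by
      rw [← hD.2.2.1]
      exact add_le_add_left h1 2
    rw [hDfin.encard_eq_coe_toFinset_card, hvDfin.encard_eq_coe_toFinset_card] at h3
    rw [Set.ncard_eq_toFinset_card _ hDfin, Set.ncard_eq_toFinset_card _ hvDfin]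
    exact_mod_cast h3
  -- handshake and the set B of high-degree vertices
  set SV : Finset V := hvDfin.toFinset with hSV
  have hhs : ∑ v ∈ SV, G.degree D v = 2 * D.ncard := Multigraph.handshake hDfin
  set B : Finset V := SV.filter (fun v => 3 ≤ G.degree D v) with hB
  have hBsum : ∑ v ∈ B, G.degree D v ≤ 12 := by
    have hsplit := Finset.sum_filter_add_sum_filter_not SV
      (fun v => 3 ≤ G.degree D v) (G.degree D)
    have hrest : ∑ v ∈ SV.filter (fun v => ¬ 3 ≤ G.degree D v), G.degree D v
        = (SV.filter (fun v => ¬ 3 ≤ G.degree D v)).card * 2 := by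
      rw [Finset.sum_congr rfl (fun v hv => ?_), Finset.sum_const, smul_eq_mul]
      have hv2 := hdeg2 v ((Set.Finite.mem_toFinset _).1 (Finset.mem_filter.1 hv).1)
      have hv3 := (Finset.mem_filter.1 hv).2
      omega
    have hcards := Finset.card_filter_add_card_filter_not (s := SV)
      (fun v => 3 ≤ G.degree D v)
    rw [← hB] at hsplit hcards
    have h3B : B.card * 3 ≤ ∑ v ∈ B, G.degree D v := by
      have := Finset.card_nsmul_le_sum B (G.degree D) 3
        (fun v hv => (Finset.mem_filter.1 hv).2)
      simpa [smul_eq_mul] using this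
    have hSVcard : SV.card = (G.verts D).ncard :=
      (Set.ncard_eq_toFinset_card _ hvDfin).symm
    omega
  -- each part contributes at least 2 to the B-degree sum
  have ha2 : ∀ C ∈ 𝒯, 2 ≤ ∑ v ∈ B, G.degree (D \ C) v := by
    intro C hC𝒯
    obtain ⟨hCc, hCD⟩ := hmem𝒯 C hC𝒯
    have hPfin : (D \ C).Finite := hDfin.diff
    have hDsplit : (D \ C) ∪ C = D := Set.diff_union_of_subset hCD
    have hdegadd : ∀ v, G.degree D v = G.degree (D \ C) v + G.degree C v := by
      intro v
      have h := Multigraph.degree_add (G := G)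
        (show ((D \ C) ∪ C).Finite by rw [hDsplit]; exact hDfin)
        Set.disjoint_sdiff_left v
      rwa [hDsplit] at h
    -- find a shared vertex
    obtain ⟨u₀, hu₀⟩ : (G.verts (D \ C)).Nonempty := by
      refine Multigraph.verts_nonempty ?_
      rw [Set.diff_nonempty]
      exact fun hsub => (hCc.ne_of_double hD hMuniv hCD) (le_antisymm hCD hsub)
    obtain ⟨w₀, hw₀⟩ : (G.verts C).Nonempty := by
      refine Multigraph.verts_nonempty hCc.circ_nonempty
    obtain ⟨es, vs, hwk, hl⟩ := hconnD u₀ w₀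
      (Multigraph.verts_mono Set.diff_subset hu₀) (Multigraph.verts_mono hCD hw₀)
    rw [Multigraph.getLast_cons_eq_getLastD] at hl
    obtain ⟨x₁, hx₁P, hx₁C⟩ := Multigraph.exists_boundary_vertex u₀ es vs
      (by rw [hDsplit]; exact hwk) hu₀ (by rw [hl]; exact hw₀)
    have hx₁deg : 3 ≤ G.degree D x₁ := by
      have h1 := (hstruct C hCc hCD).2 x₁ hx₁C
      have h2 := Multigraph.one_le_degree_of_mem_verts hx₁P hPfin
      rw [hdegadd x₁]
      omega
    have hx₁B : x₁ ∈ B := Finset.mem_filter.2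
      ⟨(Set.Finite.mem_toFinset _).2 (Multigraph.verts_mono Set.diff_subset hx₁P), hx₁deg⟩
    have hge1 : 1 ≤ ∑ v ∈ B, G.degree (D \ C) v :=
      le_trans (Multigraph.one_le_degree_of_mem_verts hx₁P hPfin)
        (Finset.single_le_sum (fun v _ => Nat.zero_le _) hx₁B)
    -- evenness via the handshake lemma on D \ C
    have hvPfin : (G.verts (D \ C)).Finite := Multigraph.verts_finite hPfin
    set SP : Finset V := hvPfin.toFinset with hSP
    have hhsP : ∑ v ∈ SP, G.degree (D \ C) v = 2 * (D \ C).ncard :=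
      Multigraph.handshake hPfin
    have hsplitP := Finset.sum_filter_add_sum_filter_not SP
      (fun v => v ∈ B) (G.degree (D \ C))
    have heq1 : ∑ v ∈ SP.filter (fun v => v ∈ B), G.degree (D \ C) v
        = ∑ v ∈ B, G.degree (D \ C) v := by
      refine Finset.sum_subset (fun v hv => (Finset.mem_filter.1 hv).2) ?_
      intro v hvB hv
      by_contra h0
      have hpos : 0 < G.degree (D \ C) v := Nat.pos_of_ne_zero h0
      exact hv (Finset.mem_filter.2
        ⟨(Set.Finite.mem_toFinset _).2 (Multigraph.mem_verts_of_degree_pos hPfin hpos), hvB⟩)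
    have heq2 : ∑ v ∈ SP.filter (fun v => ¬ v ∈ B), G.degree (D \ C) v
        = (SP.filter (fun v => ¬ v ∈ B)).card * 2 := by
      rw [Finset.sum_congr rfl (fun v hv => ?_), Finset.sum_const, smul_eq_mul]
      obtain ⟨hvSP, hvB⟩ := Finset.mem_filter.1 hv
      have hvP : v ∈ G.verts (D \ C) := (Set.Finite.mem_toFinset _).1 hvSP
      have hvD : v ∈ G.verts D := Multigraph.verts_mono Set.diff_subset hvP
      have hle2 : G.degree D v ≤ 2 := by
        by_contra h3
        exact hvB (Finset.mem_filter.2 ⟨(Set.Finite.mem_toFinset _).2 hvD, by omega⟩)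
      have hge2' := hdeg2 v hvD
      have hCzero : G.degree C v = 0 := by
        by_contra h0
        have hvC : v ∈ G.verts C := Multigraph.mem_verts_of_degree_pos
          (hDfin.subset hCD) (Nat.pos_of_ne_zero h0)
        have h1 := (hstruct C hCc hCD).2 v hvC
        have h2 := Multigraph.one_le_degree_of_mem_verts hvP hPfin
        have h3 := hdegadd v
        omega
      have h4 := hdegadd v
      omega
    omega
  -- the pointwise bound : the parts are pairwise disjoint subsets of D
  have hptwise : ∀ v : V, ∑ C ∈ 𝒯, G.degree (D \ C) v ≤ G.degree D v := by
    intro v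
    have haux : ∀ U : Finset (Set E), (∀ C ∈ U, Circuit M C ∧ C ⊆ D) →
        ∑ C ∈ U, G.degree (D \ C) v = G.degree (⋃ C ∈ U, D \ C) v := by
      intro U
      induction U using Finset.induction_on with
      | empty => intro _; simp [Multigraph.degree_empty]
      | @insert C₀ U' hC₀U' ih =>
          intro hmem
          have hdisjU : Disjoint (D \ C₀) (⋃ C ∈ U', D \ C) := by
            rw [Set.disjoint_iUnion₂_right]
            intro C hCU'
            have hCC₀ : C ≠ C₀ := fun h => hC₀U' (h ▸ hCU')
            have hU : C₀ ∪ C = D := hunion C₀ C (hmem C₀ (Finset.mem_insert_self _ _)).1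
              (hmem C (Finset.mem_insert_of_mem hCU')).1
              (hmem C₀ (Finset.mem_insert_self _ _)).2
              (hmem C (Finset.mem_insert_of_mem hCU')).2 (Ne.symm hCC₀)
            rw [Set.disjoint_left]
            rintro e ⟨heD, heC₀⟩ heU
            obtain ⟨_, heC⟩ := Set.mem_diff _ |>.1 heU
            rcases (hU ▸ heD : e ∈ C₀ ∪ C) with h | h
            · exact heC₀ h
            · exact heC h
          have hfinU : ((D \ C₀) ∪ ⋃ C ∈ U', D \ C).Finite := by
            refine hDfin.subset ?_
            rintro e (he | he)
            · exact he.1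
            · obtain ⟨S', ⟨C, rfl⟩, hS'⟩ := he
              simp only [Set.mem_iUnion] at hS'
              obtain ⟨_, h⟩ := hS'
              exact h.1
          rw [Finset.sum_insert hC₀U', ih (fun C hC => hmem C (Finset.mem_insert_of_mem hC)),
            ← Multigraph.degree_add hfinU hdisjU v]
          congr 1
          simp [Set.biUnion_insert]
    rw [haux 𝒯 hmem𝒯]
    refine Multigraph.degree_mono hDfin ?_ v
    rintro e he
    obtain ⟨S', ⟨C, rfl⟩, hS'⟩ := he
    simp only [Set.mem_iUnion] at hS'
    obtain ⟨_, h⟩ := hS'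
    exact h.1
  -- final count
  have hswap : ∑ C ∈ 𝒯, ∑ v ∈ B, G.degree (D \ C) v
      = ∑ v ∈ B, ∑ C ∈ 𝒯, G.degree (D \ C) v := Finset.sum_comm
  have hlow : 𝒯.card * 2 ≤ ∑ C ∈ 𝒯, ∑ v ∈ B, G.degree (D \ C) v := by
    have := Finset.card_nsmul_le_sum 𝒯 (fun C => ∑ v ∈ B, G.degree (D \ C) v) 2 ha2
    simpa [smul_eq_mul] using this
  have hhigh : ∑ C ∈ 𝒯, ∑ v ∈ B, G.degree (D \ C) v ≤ 12 := by
    rw [hswap]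
    exact le_trans (Finset.sum_le_sum fun v _ => hptwise v) hBsum
  rw [h𝒯card] at hlow
  omega


end Paper
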